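/- For every positive integer n, one has 1/(24(n+1)^2) < H_n - γ - log(n + 1/2) < 1/(24(n+1/2)^2), where H_n = Σ_{k=1}^n 1/k is the n-th harmonic number and γ is the Euler–Mascheroni constant. -/

import Mathlib

open Real Filter Topology

private lemma log_ratio_bounds {t : ℝ} (h0 : 0 < t) (h1 : t ≤ 1/4) :
    2*t + 2*t^3/3 + 2*t^5/5 - 2*t^6/(1-t) ≤ Real.log (1+t) - Real.log (1-t) ∧
    Real.log (1+t) - Real.log (1-t) ≤ 2*t + 2*t^3/3 + 2*t^5/5 + 2*t^6/(1-t) := by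
  have ht1 : |t| < 1 := by rw [abs_of_pos h0]; linarith
  have ht2 : |(-t)| < 1 := by rwa [abs_neg]
  have H1 := Real.abs_log_sub_add_sum_range_le ht1 5
  have H2 := Real.abs_log_sub_add_sum_range_le ht2 5
  rw [abs_of_pos h0] at H1
  rw [abs_neg, abs_of_pos h0] at H2
  have e : (1:ℝ) - -t = 1 + t := by ring
  rw [e] at H2
  norm_num [Finset.sum_range_succ] at H1 H2
  rw [abs_le] at H1 H2
  obtain ⟨H1a, H1b⟩ := H1
  obtain ⟨H2a, H2b⟩ := H2
  ring_nf at H1a H1b H2a H2b ⊢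
  constructor <;> linarith

private lemma poly_lower {u : ℝ} (hu : 2 ≤ u) :
    1/u + (1/(24*u^2) - 1/(24*(u+1)^2)) <
      2*(1/(2*u)) + 2*(1/(2*u))^3/3 + 2*(1/(2*u))^5/5 - 2*(1/(2*u))^6/(1-1/(2*u)) := by
  have h0 : (0:ℝ) < u := by linarith
  have h1 : (0:ℝ) < u + 1 := by linarith
  have h2 : (0:ℝ) < 2*u - 1 := by linarith
  have h3 : (1:ℝ) - 1/(2*u) ≠ 0 := by
    have : (1:ℝ) - 1/(2*u) = (2*u-1)/(2*u) := by field_simp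
    rw [this]; positivity
  have hrw : (1:ℝ) - 1/(2*u) = (2*u-1)/(2*u) := by field_simp
  have key : (2*(1/(2*u)) + 2*(1/(2*u))^3/3 + 2*(1/(2*u))^5/5 - 2*(1/(2*u))^6/(1-1/(2*u)))
      - (1/u + (1/(24*u^2) - 1/(24*(u+1)^2)))
      = (60*u^4 + 16*u^3 - 26*u^2 - 30*u - 18)/(240*u^5*(2*u-1)*(u+1)^2) := by
    rw [hrw]
    field_simp
    ring
  have hv : (0:ℝ) ≤ u - 2 := by linarith
  have hnum : (0:ℝ) < 60*u^4 + 16*u^3 - 26*u^2 - 30*u - 18 := by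
    nlinarith [sq_nonneg (u-2), mul_nonneg (mul_nonneg hv hv) hv, sq_nonneg ((u-2)^2)]
  have hpos : (0:ℝ) < (60*u^4 + 16*u^3 - 26*u^2 - 30*u - 18)/(240*u^5*(2*u-1)*(u+1)^2) :=
    div_pos hnum (by positivity)
  linarith [key ▸ hpos]

private lemma poly_upper {u : ℝ} (hu : 2 ≤ u) :
    2*(1/(2*u)) + 2*(1/(2*u))^3/3 + 2*(1/(2*u))^5/5 + 2*(1/(2*u))^6/(1-1/(2*u)) <
      1/u + (1/(24*(u-1/2)^2) - 1/(24*(u+1/2)^2)) := by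
  have h0 : (0:ℝ) < u := by linarith
  have h2 : (0:ℝ) < 2*u - 1 := by linarith
  have h2' : (0:ℝ) < 2*u + 1 := by linarith
  have hm : (0:ℝ) < u - 1/2 := by linarith
  have hp : (0:ℝ) < u + 1/2 := by linarith
  have h3 : (1:ℝ) - 1/(2*u) ≠ 0 := by
    have : (1:ℝ) - 1/(2*u) = (2*u-1)/(2*u) := by field_simp
    rw [this]; positivity
  have hrw : (1:ℝ) - 1/(2*u) = (2*u-1)/(2*u) := by field_simp
  have hm0 : u - 1/2 ≠ 0 := hm.ne'
  have hp0 : u + 1/2 ≠ 0 := hp.ne'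
  have key : (1/u + (1/(24*(u-1/2)^2) - 1/(24*(u+1/2)^2)))
      - (2*(1/(2*u)) + 2*(1/(2*u))^3/3 + 2*(1/(2*u))^5/5 + 2*(1/(2*u))^6/(1-1/(2*u)))
      = (112*u^4 - 120*u^3 - 56*u^2 + 30*u + 12)/(240*u^5*(2*u-1)^2*(2*u+1)^2) := by
    rw [show 24*(u-1/2)^2 = 6*(2*u-1)^2 from by ring,
        show 24*(u+1/2)^2 = 6*(2*u+1)^2 from by ring, hrw]
    field_simp [(by linarith : (0:ℝ) < u*2-1).ne', (by linarith : (0:ℝ) < u*2+1).ne']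
    ring
  have hv : (0:ℝ) ≤ u - 2 := by linarith
  have hnum : (0:ℝ) < 112*u^4 - 120*u^3 - 56*u^2 + 30*u + 12 := by
    nlinarith [sq_nonneg (u-2), mul_nonneg (mul_nonneg hv hv) hv, sq_nonneg ((u-2)^2)]
  have hpos : (0:ℝ) < (112*u^4 - 120*u^3 - 56*u^2 + 30*u + 12)/(240*u^5*(2*u-1)^2*(2*u+1)^2) :=
    div_pos hnum (by positivity)
  linarith [key ▸ hpos]

private lemma log_step_bounds' {u : ℝ} (hu : 2 ≤ u) :
    1/u + (1/(24*u^2) - 1/(24*(u+1)^2)) < Real.log (u + 1/2) - Real.log (u - 1/2) ∧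
    Real.log (u + 1/2) - Real.log (u - 1/2) <
      1/u + (1/(24*(u-1/2)^2) - 1/(24*(u+1/2)^2)) := by
  have h0u : (0:ℝ) < u := by linarith
  have h0 : (0:ℝ) < 1/(2*u) := by positivity
  have h1 : 1/(2*u) ≤ 1/4 := by
    rw [div_le_div_iff₀ (by linarith) (by norm_num)]
    linarith
  obtain ⟨hL, hU⟩ := log_ratio_bounds h0 h1
  have hp : (0:ℝ) < u + 1/2 := by linarith
  have hm : (0:ℝ) < u - 1/2 := by linarith
  have hlog : Real.log (1+1/(2*u)) - Real.log (1-1/(2*u))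
      = Real.log (u+1/2) - Real.log (u-1/2) := by
    rw [show (1:ℝ)+1/(2*u) = (u+1/2)/u by field_simp,
        show (1:ℝ)-1/(2*u) = (u-1/2)/u by field_simp,
        Real.log_div hp.ne' h0u.ne', Real.log_div hm.ne' h0u.ne']
    ring
  rw [hlog] at hL hU
  have hPL := poly_lower hu
  have hPU := poly_upper hu
  exact ⟨lt_of_lt_of_le hPL hL, lt_of_le_of_lt hU hPU⟩

private lemma log_step_bounds (m : ℕ) (hm : 1 ≤ m) :
    1/((m:ℝ)+1) + (1/(24*((m:ℝ)+1)^2) - 1/(24*((m:ℝ)+2)^2)) <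
      Real.log ((m:ℝ) + 1 + 1/2) - Real.log ((m:ℝ) + 1/2) ∧
    Real.log ((m:ℝ) + 1 + 1/2) - Real.log ((m:ℝ) + 1/2) <
      1/((m:ℝ)+1) + (1/(24*((m:ℝ)+1/2)^2) - 1/(24*((m:ℝ)+1+1/2)^2)) := by
  have hm' : (1:ℝ) ≤ (m:ℝ) := by exact_mod_cast hm
  have hu : (2:ℝ) ≤ (m:ℝ) + 1 := by linarith
  obtain ⟨hL, hU⟩ := log_step_bounds' hu
  have e1 : (m:ℝ)+1-1/2 = (m:ℝ)+1/2 := by ring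
  have e2 : (m:ℝ)+1+1 = (m:ℝ)+2 := by ring
  rw [e1] at hL hU
  rw [e2] at hL
  exact ⟨hL, hU⟩

private noncomputable def dseq (n : ℕ) : ℝ :=
  (harmonic n : ℝ) - Real.eulerMascheroniConstant - Real.log ((n:ℝ) + 1/2)

private lemma dseq_succ_sub (m : ℕ) :
    dseq (m+1) - dseq m
      = 1/((m:ℝ)+1) - (Real.log ((m:ℝ)+1+1/2) - Real.log ((m:ℝ)+1/2)) := by
  simp only [dseq, harmonic_succ]
  push_cast
  ring

private lemma tendsto_dseq : Tendsto dseq atTop (𝓝 0) := by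
  have h1 := Real.tendsto_harmonic_sub_log
  have k : Tendsto (fun n : ℕ ↦ ((n:ℝ)+1/2)/n) atTop (𝓝 1) := by
    have base : Tendsto (fun n : ℕ ↦ 1 + (1/2)/(n:ℝ)) atTop (𝓝 (1 + 0)) :=
      tendsto_const_nhds.add (tendsto_const_div_atTop_nhds_zero_nat (1/2))
    rw [add_zero] at base
    apply base.congr'
    filter_upwards [eventually_ge_atTop 1] with n hn
    have hn' : (0:ℝ) < n := by exact_mod_cast hn
    field_simp
  have h2 : Tendsto (fun n : ℕ ↦ Real.log ((n:ℝ) + 1/2) - Real.log n) atTop (𝓝 0) := by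
    have := ((Real.continuousAt_log (by norm_num : (1:ℝ) ≠ 0)).tendsto.comp k)
    rw [Real.log_one] at this
    apply this.congr'
    filter_upwards [eventually_ge_atTop 1] with n hn
    have hn' : (0:ℝ) < n := by exact_mod_cast hn
    simp only [Function.comp_apply]
    rw [Real.log_div (by positivity) hn'.ne']
  have comb := h1.sub h2
  rw [sub_zero] at comb
  have : Tendsto (fun n : ℕ ↦ ((harmonic n : ℝ) - Real.log n)
      - (Real.log ((n:ℝ) + 1/2) - Real.log n) - Real.eulerMascheroniConstant) atTop
      (𝓝 (Real.eulerMascheroniConstant - Real.eulerMascheroniConstant)) :=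
    comb.sub tendsto_const_nhds
  rw [sub_self] at this
  apply this.congr
  intro n
  simp only [dseq]
  ring

private noncomputable def fseq (n : ℕ) : ℝ := dseq n - 1/(24*((n:ℝ)+1)^2)
private noncomputable def gseq (n : ℕ) : ℝ := dseq n - 1/(24*((n:ℝ)+1/2)^2)

private lemma fseq_step (m : ℕ) (hm : 1 ≤ m) : fseq (m+1) < fseq m := by
  obtain ⟨hL, _⟩ := log_step_bounds m hm
  have hd := dseq_succ_sub m
  simp only [fseq]
  push_cast
  have e : ((m:ℝ)+1+1) = (m:ℝ)+2 := by ring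
  rw [e]
  linarith

private lemma gseq_step (m : ℕ) (hm : 1 ≤ m) : gseq m < gseq (m+1) := by
  obtain ⟨_, hU⟩ := log_step_bounds m hm
  have hd := dseq_succ_sub m
  simp only [gseq]
  push_cast
  linarith

private lemma tendsto_small (c : ℝ) (hc : 0 < c) :
    Tendsto (fun n : ℕ ↦ 1/(24*((n:ℝ)+c)^2)) atTop (𝓝 0) := by
  apply squeeze_zero' (g := fun n : ℕ ↦ 1/(n:ℝ))
  · filter_upwards [eventually_ge_atTop 1] with n hn
    positivity
  · filter_upwards [eventually_ge_atTop 1] with n hn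
    have hn' : (1:ℝ) ≤ n := by exact_mod_cast hn
    have h1 : (0:ℝ) < n := by linarith
    have h2 : (0:ℝ) < 24*((n:ℝ)+c)^2 := by positivity
    rw [div_le_div_iff₀ h2 h1]
    nlinarith
  · exact tendsto_one_div_atTop_nhds_zero_nat

private lemma tendsto_fseq : Tendsto fseq atTop (𝓝 0) := by
  have := tendsto_dseq.sub (tendsto_small 1 one_pos)
  rw [sub_zero] at this
  exact this

private lemma tendsto_gseq : Tendsto gseq atTop (𝓝 0) := by
  have := tendsto_dseq.sub (tendsto_small (1/2) (by norm_num))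
  rw [sub_zero] at this
  exact this

private lemma fseq_antitone (n : ℕ) (hn : 1 ≤ n) : ∀ m, n ≤ m → fseq m ≤ fseq n := by
  intro m hm
  induction m, hm using Nat.le_induction with
  | base => exact le_refl _
  | succ k hk ih => exact le_trans (fseq_step k (le_trans hn hk)).le ih

private lemma gseq_monotone (n : ℕ) (hn : 1 ≤ n) : ∀ m, n ≤ m → gseq n ≤ gseq m := by
  intro m hm
  induction m, hm using Nat.le_induction with
  | base => exact le_refl _
  | succ k hk ih => exact le_trans ih (gseq_step k (le_trans hn hk)).le

theorem stmt_1 (n : ℕ) (hn : 0 < n) :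
    1 / (24 * ((n : ℝ) + 1)^2) <
      (harmonic n : ℝ) - Real.eulerMascheroniConstant - Real.log ((n : ℝ) + 1/2) ∧
    (harmonic n : ℝ) - Real.eulerMascheroniConstant - Real.log ((n : ℝ) + 1/2) <
      1 / (24 * ((n : ℝ) + 1/2)^2) := by
  have hn1 : 1 ≤ n := hn
  constructor
  · have h1 : (0:ℝ) ≤ fseq (n+1) := by
      apply le_of_tendsto tendsto_fseq
      filter_upwards [eventually_ge_atTop (n+1)] with m hm
      exact fseq_antitone (n+1) (by omega) m hm
    have h2 : fseq (n+1) < fseq n := fseq_step n hn1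
    have : 0 < fseq n := lt_of_le_of_lt h1 h2
    simpa only [fseq, sub_pos, dseq] using this
  · have h1 : gseq (n+1) ≤ (0:ℝ) := by
      apply ge_of_tendsto tendsto_gseq
      filter_upwards [eventually_ge_atTop (n+1)] with m hm
      exact gseq_monotone (n+1) (by omega) m hm
    have h2 : gseq n < gseq (n+1) := gseq_step n hn1
    have : gseq n < 0 := lt_of_lt_of_le h2 h1
    simpa only [gseq, sub_neg, dseq] using this
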